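/- (Linear regret for window size w = 1.) Let η ∈ (0, 1], let proj denote the metric projection of ℝ onto [−1, 1], and define the projected-gradient residual P_η(x; d) = (x − proj(x − η d))/η for x, d ∈ ℝ. Let ε₁, …, ε_T be i.i.d. random variables with P(ε_t = 1) = P(ε_t = −1) = 1/2, and let f_t(x) = ε_t·x, so ∇f_t(x) = ε_t. Let (x_t)_{t=1}^T be any predictable policy with values in [−1, 1], i.e., x_t is measurable with respect to σ(ε₁, …, ε_{t−1}) (x₁ deterministic). Then E[Σ_{t=1}^T |P_η(x_t; ε_t)|²] ≥ T/2; hence no online policy can achieve sublinear unsmoothed (w = 1) local regret in this constrained non-convex online setting. -/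

import Mathlib

noncomputable section

open Finset MeasureTheory ProbabilityTheory

/-- Key arithmetic fact: for `a ∈ [-1,1]` and `0 < η ≤ 1`, the two residuals (for
signs `+1` and `-1`) have squares summing to at least `1`. -/
lemma stmt17_key (η a : ℝ) (hη0 : 0 < η) (hη1 : η ≤ 1) (ha1 : -1 ≤ a) (ha2 : a ≤ 1) :
    1 ≤ ((a - max (-1) (min 1 (a - η))) / η) ^ 2
      + ((a - max (-1) (min 1 (a + η))) / η) ^ 2 := by
  have hne : η ≠ 0 := ne_of_gt hη0
  rcases le_total 0 a with h | h
  · have h1 : min 1 (a - η) = a - η := min_eq_right (by linarith)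
    have h2 : max (-1) (a - η) = a - η := max_eq_right (by linarith)
    have h3 : ((a - max (-1) (min 1 (a - η))) / η) ^ 2 = 1 := by
      rw [h1, h2]
      have : a - (a - η) = η := by ring
      rw [this, div_self hne, one_pow]
    rw [h3]
    nlinarith [sq_nonneg ((a - max (-1) (min 1 (a + η))) / η)]
  · have h1 : min 1 (a + η) = a + η := min_eq_right (by linarith)
    have h2 : max (-1) (a + η) = a + η := max_eq_right (by linarith)
    have h3 : ((a - max (-1) (min 1 (a + η))) / η) ^ 2 = 1 := by
      rw [h1, h2]
      have : a - (a + η) = -η := by ring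
      rw [this, neg_div, div_self hne, neg_one_sq]
    rw [h3]
    nlinarith [sq_nonneg ((a - max (-1) (min 1 (a - η))) / η)]

/-- linear regret for window size `w = 1`: with `proj` the metric projection
of `ℝ` onto `[−1, 1]`, the projected-gradient residual `P_η(x; d) = (x − proj(x − ηd))/η`,
i.i.d. Rademacher signs `ε_t`, losses `f_t(x) = ε_t·x` (so `∇f_t(x) = ε_t`), and any
predictable policy `(x_t)` with values in `[−1, 1]` (each `x_t` measurable with respect to
`σ(ε₁, …, ε_{t−1})`), the expected unsmoothed local regret satisfies
`E[Σ_{t=1}^T |P_η(x_t; ε_t)|²] ≥ T/2`. -/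
theorem stmt17 {Ω : Type*} [MeasurableSpace Ω] (μ : Measure Ω) [IsProbabilityMeasure μ]
    (η : ℝ) (hη0 : 0 < η) (hη1 : η ≤ 1)
    (proj : ℝ → ℝ) (hproj : ∀ s : ℝ, proj s = max (-1) (min 1 s))
    (T : ℕ) (hT : 1 ≤ T)
    (εs : ℕ → Ω → ℝ) (hmeas : ∀ t, Measurable (εs t))
    (hindep : iIndepFun εs μ)
    (hdist1 : ∀ t ∈ Finset.Icc 1 T, μ {ω | εs t ω = 1} = 1 / 2)
    (hdistm : ∀ t ∈ Finset.Icc 1 T, μ {ω | εs t ω = -1} = 1 / 2)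
    (x : ℕ → Ω → ℝ)
    (hrange : ∀ t ω, x t ω ∈ Set.Icc (-1 : ℝ) 1)
    (hpred : ∀ t ∈ Finset.Icc 1 T,
      Measurable[⨆ s ∈ Set.Icc 1 (t - 1), MeasurableSpace.comap (εs s)
        (inferInstance : MeasurableSpace ℝ)] (x t)) :
    (T : ℝ) / 2 ≤
      ∫ ω, (∑ t ∈ Finset.Icc 1 T, ((x t ω - proj (x t ω - η * εs t ω)) / η) ^ 2) ∂μ := by
  have hne : η ≠ 0 := ne_of_gt hη0
  -- projection bounds
  have hprojmem : ∀ s : ℝ, -1 ≤ proj s ∧ proj s ≤ 1 := by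
    intro s
    rw [hproj]
    exact ⟨le_max_left _ _, max_le (by norm_num) (min_le_left _ _)⟩
  have hprojcont : Continuous proj := by
    have : proj = fun s => max (-1) (min 1 s) := funext hproj
    rw [this]
    exact continuous_const.max (continuous_const.min continuous_id)
  -- measurability of each x t (w.r.t. the ambient σ-algebra)
  have hxmeas : ∀ t ∈ Finset.Icc 1 T, Measurable (x t) := by
    intro t ht
    refine (hpred t ht).mono ?_ le_rfl
    exact iSup₂_le fun s _ => (hmeas s).comap_le
  -- the generic term as a function of (a, e)
  set φ : ℝ → ℝ → ℝ := fun e a => ((a - proj (a - η * e)) / η) ^ 2 with hφ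
  have hφcont : ∀ e, Continuous (φ e) := by
    intro e
    exact (((continuous_id.sub (hprojcont.comp (continuous_id.sub continuous_const))).div_const
      η).pow 2)
  have hφnonneg : ∀ e a, 0 ≤ φ e a := fun e a => sq_nonneg _
  have hφbdd : ∀ e a, -1 ≤ a → a ≤ 1 → φ e a ≤ 4 / η ^ 2 := by
    intro e a ha1 ha2
    have h := hprojmem (a - η * e)
    have habs : (a - proj (a - η * e)) ^ 2 ≤ 4 := by nlinarith [h.1, h.2]
    have : φ e a = (a - proj (a - η * e)) ^ 2 / η ^ 2 := by simp only [hφ]; rw [div_pow]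
    rw [this]
    exact (div_le_div_iff_of_pos_right (by positivity)).mpr habs
  -- bound each term's integral by 1/2
  have hterm : ∀ t ∈ Finset.Icc 1 T,
      (1 : ℝ) / 2 ≤ ∫ ω, ((x t ω - proj (x t ω - η * εs t ω)) / η) ^ 2 ∂μ := by
    intro t ht
    have ht1 : 1 ≤ t := (Finset.mem_Icc.mp ht).1
    -- independence of x t and εs t
    have hIndep : IndepFun (x t) (εs t) μ := by
      rw [IndepFun_iff_Indep]
      have hsup : Indep
          (⨆ s ∈ Set.Icc 1 (t - 1), MeasurableSpace.comap (εs s)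
            (inferInstance : MeasurableSpace ℝ))
          (⨆ s ∈ ({t} : Set ℕ), MeasurableSpace.comap (εs s)
            (inferInstance : MeasurableSpace ℝ)) μ := by
        refine indep_iSup_of_disjoint (fun i => (hmeas i).comap_le)
          ((iIndepFun_iff_iIndep _ _ _).mp hindep) ?_
        rw [Set.disjoint_singleton_right, Set.mem_Icc]
        intro hc
        omega
      refine indep_of_indep_of_le_left (indep_of_indep_of_le_right hsup ?_) ?_
      · exact le_biSup (fun s => MeasurableSpace.comap (εs s)
          (inferInstance : MeasurableSpace ℝ)) (Set.mem_singleton t)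
      · exact (hpred t ht).comap_le
    have hxm : Measurable (x t) := hxmeas t ht
    -- indicator functions of the sign events
    set ψ1 : ℝ → ℝ := Set.indicator ({1} : Set ℝ) (fun _ => (1 : ℝ)) with hψ1
    set ψ2 : ℝ → ℝ := Set.indicator ({-1} : Set ℝ) (fun _ => (1 : ℝ)) with hψ2
    have hψ1m : Measurable ψ1 := measurable_const.indicator (measurableSet_singleton _)
    have hψ2m : Measurable ψ2 := measurable_const.indicator (measurableSet_singleton _)
    have hψnonneg : ∀ (ψ : ℝ → ℝ), ψ = ψ1 ∨ ψ = ψ2 → ∀ e, 0 ≤ ψ e := by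
      rintro ψ (rfl | rfl) e <;> exact Set.indicator_nonneg (fun _ _ => zero_le_one) e
    -- independence of transformed variables
    have hInd1 : IndepFun (fun ω => φ 1 (x t ω)) (fun ω => ψ1 (εs t ω)) μ :=
      hIndep.comp (hφcont 1).measurable hψ1m
    have hInd2 : IndepFun (fun ω => φ (-1) (x t ω)) (fun ω => ψ2 (εs t ω)) μ :=
      hIndep.comp (hφcont (-1)).measurable hψ2m
    -- integrals of the indicators
    have hint1 : ∫ ω, ψ1 (εs t ω) ∂μ = 1 / 2 := by
      have heq : (fun ω => ψ1 (εs t ω)) =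
          Set.indicator (εs t ⁻¹' {1}) (fun _ => (1 : ℝ)) := by
        funext ω
        rw [hψ1]
        by_cases h : εs t ω = 1 <;>
          simp [Set.indicator_apply, Set.mem_preimage, h]
      rw [heq, integral_indicator_const _ ((hmeas t) (measurableSet_singleton (1 : ℝ)))]
      have : εs t ⁻¹' {1} = {ω | εs t ω = 1} := rfl
      rw [this, measureReal_def, hdist1 t ht]
      simp [ENNReal.toReal_div]
    have hint2 : ∫ ω, ψ2 (εs t ω) ∂μ = 1 / 2 := by
      have heq : (fun ω => ψ2 (εs t ω)) =
          Set.indicator (εs t ⁻¹' {-1}) (fun _ => (1 : ℝ)) := by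
        funext ω
        rw [hψ2]
        by_cases h : εs t ω = -1 <;>
          simp [Set.indicator_apply, Set.mem_preimage, h]
      rw [heq, integral_indicator_const _ ((hmeas t) (measurableSet_singleton (-1 : ℝ)))]
      have : εs t ⁻¹' {-1} = {ω | εs t ω = -1} := rfl
      rw [this, measureReal_def, hdistm t ht]
      simp [ENNReal.toReal_div]
    -- integrability facts
    have hb : ∀ (e : ℝ), Integrable (fun ω => φ e (x t ω)) μ := by
      intro e
      refine Integrable.mono' (integrable_const (4 / η ^ 2))
        ((hφcont e).measurable.comp hxm).aestronglyMeasurable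
        (ae_of_all _ fun ω => ?_)
      rw [Real.norm_eq_abs, abs_of_nonneg (hφnonneg e _)]
      exact hφbdd e (x t ω) (hrange t ω).1 (hrange t ω).2
    have hbt : Integrable (fun ω => ((x t ω - proj (x t ω - η * εs t ω)) / η) ^ 2) μ := by
      refine Integrable.mono' (integrable_const (4 / η ^ 2)) ?_ (ae_of_all _ fun ω => ?_)
      · exact ((((hxm.sub ((hprojcont.measurable).comp
          (hxm.sub ((hmeas t).const_mul η)))).div_const η).pow_const 2)).aestronglyMeasurable
      · rw [Real.norm_eq_abs, abs_of_nonneg (sq_nonneg _)]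
        exact hφbdd (εs t ω) (x t ω) (hrange t ω).1 (hrange t ω).2
    -- pointwise lower bound
    have hptwise : ∀ ω, φ 1 (x t ω) * ψ1 (εs t ω) + φ (-1) (x t ω) * ψ2 (εs t ω) ≤
        ((x t ω - proj (x t ω - η * εs t ω)) / η) ^ 2 := by
      intro ω
      by_cases h1 : εs t ω = 1
      · have : ψ1 (εs t ω) = 1 := by simp [hψ1, h1]
        rw [this]
        have h2 : ψ2 (εs t ω) = 0 := by norm_num [hψ2, h1]
        rw [h2, mul_one, mul_zero, add_zero, h1]
      · by_cases h2 : εs t ω = -1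
        · have e1 : ψ1 (εs t ω) = 0 := by norm_num [hψ1, h2]
          have e2 : ψ2 (εs t ω) = 1 := by simp [hψ2, h2]
          rw [e1, e2, mul_one, mul_zero, zero_add, h2]
        · have e1 : ψ1 (εs t ω) = 0 := by simp [hψ1, h1]
          have e2 : ψ2 (εs t ω) = 0 := by simp [hψ2, h2]
          rw [e1, e2, mul_zero, mul_zero, add_zero]
          exact sq_nonneg _
    -- integral of the lower bound
    have hmul1 : ∫ ω, φ 1 (x t ω) * ψ1 (εs t ω) ∂μ =
        (∫ ω, φ 1 (x t ω) ∂μ) * (1 / 2) := by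
      have h := hInd1.integral_mul_eq_mul_integral
        ((hφcont 1).measurable.comp hxm).aestronglyMeasurable (hψ1m.comp (hmeas t)).aestronglyMeasurable
      have hXY : (fun ω => φ 1 (x t ω) * ψ1 (εs t ω)) =
          (fun ω => φ 1 (x t ω)) * (fun ω => ψ1 (εs t ω)) := rfl
      rw [show (∫ ω, φ 1 (x t ω) * ψ1 (εs t ω) ∂μ) =
        integral μ ((fun ω => φ 1 (x t ω)) * (fun ω => ψ1 (εs t ω))) from congrArg (integral μ) hXY,
        h, hint1]
    have hmul2 : ∫ ω, φ (-1) (x t ω) * ψ2 (εs t ω) ∂μ =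
        (∫ ω, φ (-1) (x t ω) ∂μ) * (1 / 2) := by
      have h := hInd2.integral_mul_eq_mul_integral
        ((hφcont (-1)).measurable.comp hxm).aestronglyMeasurable (hψ2m.comp (hmeas t)).aestronglyMeasurable
      have hXY : (fun ω => φ (-1) (x t ω) * ψ2 (εs t ω)) =
          (fun ω => φ (-1) (x t ω)) * (fun ω => ψ2 (εs t ω)) := rfl
      rw [show (∫ ω, φ (-1) (x t ω) * ψ2 (εs t ω) ∂μ) =
        integral μ ((fun ω => φ (-1) (x t ω)) * (fun ω => ψ2 (εs t ω))) from
          congrArg (integral μ) hXY,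
        h, hint2]
    -- the sum of the two φ integrals is at least 1
    have hsum1 : (1 : ℝ) ≤ (∫ ω, φ 1 (x t ω) ∂μ) + (∫ ω, φ (-1) (x t ω) ∂μ) := by
      rw [← integral_add (hb 1) (hb (-1))]
      have h1 : (1 : ℝ) = ∫ _ : Ω, (1 : ℝ) ∂μ := by simp
      refine h1.trans_le (integral_mono (integrable_const 1) ((hb 1).add (hb (-1)))
        (fun ω => ?_))
      have hk := stmt17_key η (x t ω) hη0 hη1 (hrange t ω).1 (hrange t ω).2
      simp only [hφ, hproj, mul_one, mul_neg_one, sub_neg_eq_add] at *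
      exact hk
    -- finish
    have hψle : ∀ (ψ : ℝ → ℝ), ψ = ψ1 ∨ ψ = ψ2 → ∀ e, ψ e ≤ 1 := by
      rintro ψ (rfl | rfl) e <;>
        exact Set.indicator_le' (fun _ _ => le_rfl) (fun _ _ => zero_le_one) e
    have hprod : ∀ (e : ℝ) (ψ : ℝ → ℝ), ψ = ψ1 ∨ ψ = ψ2 →
        Integrable (fun ω => φ e (x t ω) * ψ (εs t ω)) μ := by
      intro e ψ hel
      have hψm : Measurable ψ := by rcases hel with rfl | rfl; exacts [hψ1m, hψ2m]
      refine Integrable.mono' (integrable_const (4 / η ^ 2))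
        (((hφcont e).measurable.comp hxm).mul (hψm.comp (hmeas t))).aestronglyMeasurable
        (ae_of_all _ fun ω => ?_)
      rw [Real.norm_eq_abs,
        abs_of_nonneg (mul_nonneg (hφnonneg _ _) (hψnonneg ψ hel _))]
      calc φ e (x t ω) * ψ (εs t ω) ≤ (4 / η ^ 2) * 1 :=
            mul_le_mul (hφbdd e (x t ω) (hrange t ω).1 (hrange t ω).2) (hψle ψ hel _)
              (hψnonneg ψ hel _) (by positivity)
        _ = 4 / η ^ 2 := mul_one _
    calc (1 : ℝ) / 2
        ≤ ((∫ ω, φ 1 (x t ω) ∂μ) + (∫ ω, φ (-1) (x t ω) ∂μ)) * (1 / 2) := by linarith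
      _ = (∫ ω, φ 1 (x t ω) ∂μ) * (1 / 2) + (∫ ω, φ (-1) (x t ω) ∂μ) * (1 / 2) := by ring
      _ = ∫ ω, (φ 1 (x t ω) * ψ1 (εs t ω) + φ (-1) (x t ω) * ψ2 (εs t ω)) ∂μ := by
          rw [integral_add (hprod 1 ψ1 (Or.inl rfl)) (hprod (-1) ψ2 (Or.inr rfl)),
            hmul1, hmul2]
      _ ≤ ∫ ω, ((x t ω - proj (x t ω - η * εs t ω)) / η) ^ 2 ∂μ :=
          integral_mono ((hprod 1 ψ1 (Or.inl rfl)).add (hprod (-1) ψ2 (Or.inr rfl))) hbt hptwise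
  -- sum up
  have hintt : ∀ t ∈ Finset.Icc 1 T,
      Integrable (fun ω => ((x t ω - proj (x t ω - η * εs t ω)) / η) ^ 2) μ := by
    intro t ht
    have hxm := hxmeas t ht
    refine Integrable.mono' (integrable_const (4 / η ^ 2)) ?_ (ae_of_all _ fun ω => ?_)
    · exact ((((hxm.sub ((hprojcont.measurable).comp
        (hxm.sub ((hmeas t).const_mul η)))).div_const η).pow_const 2)).aestronglyMeasurable
    · rw [Real.norm_eq_abs, abs_of_nonneg (sq_nonneg _)]
      exact hφbdd (εs t ω) (x t ω) (hrange t ω).1 (hrange t ω).2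
  rw [integral_finset_sum _ hintt]
  have hcard : (Finset.Icc 1 T).card = T := by
    rw [Nat.card_Icc]
    omega
  calc (T : ℝ) / 2 = ∑ _t ∈ Finset.Icc 1 T, (1 : ℝ) / 2 := by
        rw [Finset.sum_const, hcard, nsmul_eq_mul]
        ring
    _ ≤ ∑ t ∈ Finset.Icc 1 T, ∫ ω, ((x t ω - proj (x t ω - η * εs t ω)) / η) ^ 2 ∂μ :=
        Finset.sum_le_sum hterm
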